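/- arXiv:math/0005045 — 2 statements merged into one kernel-verified Lean document; each statement's English description precedes it below -/
import Mathlib

section
/- Let P_1,…,P_n ∈ K⟨n⟩. If Σ_{j=1}^n X_j P_j lies in the cyclic subspace CK⟨n⟩, then for every k with 1 ≤ k ≤ n one has δ_k(Σ_{j=1}^n X_j P_j) = (N + I) P_k, where I is the identity map of K⟨n⟩. -/
/-! Setup: the free associative algebra `K⟨X_1,…,X_n⟩` realized as the monoid
algebra of the free monoid on `Fin n`, together with the partial cyclic
derivatives `δ_j`, the number operator `N` and the cyclic symmetrization `C`. -/

noncomputable section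

/-- `K⟨n⟩`, the ring of polynomials in `n` noncommuting indeterminates. -/
abbrev FreePoly (K : Type) [CommSemiring K] (n : ℕ) : Type :=
  MonoidAlgebra K (FreeMonoid (Fin n))

/-- The monomial `X_{i_1} ⋯ X_{i_p}` associated to the word `w = [i_1,…,i_p]`. -/
def mono (K : Type) [Field K] {n : ℕ} (w : List (Fin n)) : FreePoly K n :=
  MonoidAlgebra.single (FreeMonoid.ofList w) 1

/-- The indeterminate `X k`. -/
def Xvar (K : Type) [Field K] {n : ℕ} (k : Fin n) : FreePoly K n := mono K [k]

variable {K : Type} [Field K] [CharZero K] {n : ℕ}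

/-- The partial cyclic derivative `δ_j = μ̃ ∘ ∂_j`: on a monomial
`X_{i_0} ⋯ X_{i_s}` it gives `∑_{p : i_p = j} X_{i_{p+1}} ⋯ X_{i_s} X_{i_0} ⋯ X_{i_{p-1}}`. -/
def cycDeriv (j : Fin n) : FreePoly K n →ₗ[K] FreePoly K n :=
  (Finsupp.lsum K fun w => LinearMap.toSpanSingleton K _
    (∑ p : Fin (FreeMonoid.toList w).length,
      if (FreeMonoid.toList w).get p = j then
        mono K ((FreeMonoid.toList w).drop (p + 1) ++ (FreeMonoid.toList w).take p)
      else 0)) ∘ₗ (MonoidAlgebra.coeffLinearEquiv K).toLinearMap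

/-- The number operator `N`, multiplying a monomial by its degree. -/
def numOp : FreePoly K n →ₗ[K] FreePoly K n :=
  (Finsupp.lsum K fun w => LinearMap.toSpanSingleton K _
    ((FreeMonoid.toList w).length • mono K (FreeMonoid.toList w))) ∘ₗ
    (MonoidAlgebra.coeffLinearEquiv K).toLinearMap

/-- The cyclic symmetrization `C`, sending a monomial of degree `p ≥ 1` to the
sum of its `p` cyclic rotations (and `1` to `0`). -/
def cycSym : FreePoly K n →ₗ[K] FreePoly K n :=
  (Finsupp.lsum K fun w => LinearMap.toSpanSingleton K _
    (∑ p ∈ Finset.range (FreeMonoid.toList w).length,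
      mono K ((FreeMonoid.toList w).rotate (p + 1)))) ∘ₗ
    (MonoidAlgebra.coeffLinearEquiv K).toLinearMap

set_option linter.unusedSectionVars false

lemma lsum_eval (v : FreeMonoid (Fin n) → FreePoly K n) (w : FreeMonoid (Fin n)) (c : K) :
    ((Finsupp.lsum K fun u => LinearMap.toSpanSingleton K (FreePoly K n) (v u)) ∘ₗ
      (MonoidAlgebra.coeffLinearEquiv K).toLinearMap) (MonoidAlgebra.single w c) = c • v w :=
  (Finsupp.lsum_single K _ w c).trans (LinearMap.toSpanSingleton_apply K _ (v w) c)

/-- Auxiliary: value of the left shift on a word. -/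
def sVal (k : Fin n) : List (Fin n) → FreePoly K n
  | [] => 0
  | a :: t => if a = k then mono K t else 0

/-- The left shift `F ↦ (w ↦ F(k::w))`. -/
def shiftL (k : Fin n) : FreePoly K n →ₗ[K] FreePoly K n :=
  (Finsupp.lsum K fun w => LinearMap.toSpanSingleton K _ (sVal k (FreeMonoid.toList w))) ∘ₗ
    (MonoidAlgebra.coeffLinearEquiv K).toLinearMap

lemma single_eq_smul_mono (w : FreeMonoid (Fin n)) (c : K) :
    (MonoidAlgebra.single w c : FreePoly K n) = c • mono K (FreeMonoid.toList w) := by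
  rw [mono, FreeMonoid.ofList_toList, MonoidAlgebra.smul_single, smul_eq_mul,
    mul_one]

lemma numOp_mono (u : List (Fin n)) : numOp (mono K u) = u.length • mono K u := by
  have h := lsum_eval (K := K)
    (fun w => (FreeMonoid.toList w).length • mono K (FreeMonoid.toList w))
    (FreeMonoid.ofList u) (1 : K)
  exact h.trans (by rw [one_smul, FreeMonoid.toList_ofList])

lemma cycSym_mono (u : List (Fin n)) :
    cycSym (mono K u) = ∑ p ∈ Finset.range u.length, mono K (u.rotate (p + 1)) := by
  have h := lsum_eval (K := K)
    (fun w => ∑ p ∈ Finset.range (FreeMonoid.toList w).length,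
      mono K ((FreeMonoid.toList w).rotate (p + 1)))
    (FreeMonoid.ofList u) (1 : K)
  exact h.trans (by rw [one_smul, FreeMonoid.toList_ofList])

lemma shiftL_mono (k : Fin n) (u : List (Fin n)) : shiftL k (mono K u) = sVal k u := by
  have h := lsum_eval (K := K) (fun w => sVal k (FreeMonoid.toList w))
    (FreeMonoid.ofList u) (1 : K)
  exact h.trans (by rw [one_smul, FreeMonoid.toList_ofList])

lemma cycDeriv_mono (j : Fin n) (u : List (Fin n)) :
    cycDeriv j (mono K u) =
      ∑ p : Fin u.length,
        if u.get p = j then mono K (u.drop (p + 1) ++ u.take p) else 0 := by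
  have h := lsum_eval (K := K)
    (fun w => ∑ p : Fin (FreeMonoid.toList w).length,
      if (FreeMonoid.toList w).get p = j then
        mono K ((FreeMonoid.toList w).drop (p + 1) ++ (FreeMonoid.toList w).take p)
      else 0)
    (FreeMonoid.ofList u) (1 : K)
  refine h.trans ?_
  rw [one_smul]
  rfl

lemma shiftL_single (k : Fin n) (w : FreeMonoid (Fin n)) (c : K) :
    shiftL k (MonoidAlgebra.single w c) = c • sVal k (FreeMonoid.toList w) := by
  rw [single_eq_smul_mono, map_smul, shiftL_mono]

/-- Each cyclic-derivative summand is the shift value of a rotation. -/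
lemma cycDeriv_mono_eq_sum_rotate (k : Fin n) (u : List (Fin n)) :
    cycDeriv k (mono K u) = ∑ r ∈ Finset.range u.length, sVal k (u.rotate r) := by
  rw [cycDeriv_mono, ← Fin.sum_univ_eq_sum_range (fun r => sVal k (u.rotate r)) u.length]
  refine Finset.sum_congr rfl fun r _ => ?_
  have hr : (r : ℕ) < u.length := r.isLt
  have hrot : u.rotate (r : ℕ) = u[(r : ℕ)] :: (u.drop ((r : ℕ) + 1) ++ u.take (r : ℕ)) := by
    rw [List.rotate_eq_drop_append_take hr.le, List.drop_eq_getElem_cons hr, List.cons_append]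
  rw [hrot, sVal]
  simp [List.get_eq_getElem]

lemma numOp_sVal_add (k : Fin n) (l : List (Fin n)) :
    numOp (sVal k l) + sVal k l = l.length • (sVal (K := K) k l) := by
  cases l with
  | nil => simp [sVal]
  | cons a t =>
    by_cases h : a = k
    · simp only [sVal, if_pos h, numOp_mono, List.length_cons, add_smul, one_smul]
    · simp [sVal, if_neg h]

lemma sum_range_shift_one {M : Type} [AddCommGroup M] (H : ℕ → M) (p : ℕ) (hH : H p = H 0) :
    ∑ q ∈ Finset.range p, H (q + 1) = ∑ q ∈ Finset.range p, H q := by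
  have h1 := Finset.sum_range_succ H p
  have h2 := Finset.sum_range_succ' H p
  rw [h1, hH] at h2
  exact (add_right_cancel h2).symm

lemma sum_range_shift {M : Type} [AddCommGroup M] (F : ℕ → M) (p : ℕ)
    (hF : ∀ m, F (m % p) = F m) (c : ℕ) :
    ∑ q ∈ Finset.range p, F (q + c) = ∑ q ∈ Finset.range p, F q := by
  induction c with
  | zero => simp
  | succ c ih =>
    have hH : F (p + c) = F (0 + c) := by
      rw [← hF (p + c), ← hF (0 + c), Nat.zero_add, Nat.add_mod_left]
    have hmain := sum_range_shift_one (fun m => F (m + c)) p hH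
    calc ∑ q ∈ Finset.range p, F (q + (c + 1))
        = ∑ q ∈ Finset.range p, F ((q + 1) + c) := by
          refine Finset.sum_congr rfl fun q _ => ?_
          congr 1; omega
      _ = ∑ q ∈ Finset.range p, F (q + c) := hmain
      _ = ∑ q ∈ Finset.range p, F q := ih

/-- Core combinatorial identity on cyclic symmetrizations of monomials. -/
lemma core (k : Fin n) (w : List (Fin n)) :
    cycDeriv k (cycSym (mono K w)) =
      numOp (shiftL k (cycSym (mono K w))) + shiftL k (cycSym (mono K w)) := by
  set p := w.length with hp
  rw [cycSym_mono, map_sum, map_sum, map_sum, ← Finset.sum_add_distrib]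
  set F : ℕ → FreePoly K n := fun m => sVal k (w.rotate m) with hFdef
  have hFper : ∀ m, F (m % p) = F m := by
    intro m
    simp only [hFdef, hp, List.rotate_mod]
  have hlen : ∀ m, (w.rotate m).length = p := fun m => List.length_rotate w m
  have hL : ∀ q, cycDeriv k (mono K (w.rotate (q + 1)))
      = ∑ r ∈ Finset.range p, F (r + (q + 1)) := by
    intro q
    rw [cycDeriv_mono_eq_sum_rotate, hlen]
    refine Finset.sum_congr rfl fun r _ => ?_
    simp only [hFdef, List.rotate_rotate]
    rw [Nat.add_comm (q + 1) r]
  have hR : ∀ q, numOp (shiftL k (mono K (w.rotate (q + 1)))) + shiftL k (mono K (w.rotate (q + 1)))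
      = p • F (q + 1) := by
    intro q
    rw [shiftL_mono]
    rw [← hlen (q + 1)]
    exact numOp_sVal_add k _
  calc ∑ q ∈ Finset.range p, cycDeriv k (mono K (w.rotate (q + 1)))
      = ∑ q ∈ Finset.range p, ∑ r ∈ Finset.range p, F (r + (q + 1)) :=
        Finset.sum_congr rfl fun q _ => hL q
    _ = ∑ q ∈ Finset.range p, ∑ r ∈ Finset.range p, F r :=
        Finset.sum_congr rfl fun q _ => sum_range_shift F p hFper (q + 1)
    _ = p • ∑ r ∈ Finset.range p, F r := by
        rw [Finset.sum_const, Finset.card_range]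
    _ = p • ∑ q ∈ Finset.range p, F (q + 1) := by
        rw [sum_range_shift F p hFper 1]
    _ = ∑ q ∈ Finset.range p, p • F (q + 1) := Finset.smul_sum
    _ = _ := Finset.sum_congr rfl fun q _ => (hR q).symm

lemma key (k : Fin n) (G : FreePoly K n) :
    cycDeriv k (cycSym G) =
      numOp (shiftL k (cycSym G)) + shiftL k (cycSym G) := by
  have hext : (cycDeriv k).comp (cycSym (K := K) (n := n)) =
      ((numOp + LinearMap.id).comp ((shiftL k).comp cycSym)) := by
    refine MonoidAlgebra.lhom_ext' fun a => LinearMap.ext fun b => ?_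
    have ha : (MonoidAlgebra.single a b : FreePoly K n) = b • mono K (FreeMonoid.toList a) :=
      single_eq_smul_mono a b
    simp only [LinearMap.comp_apply, MonoidAlgebra.lsingle_apply, ha, map_smul, LinearMap.add_apply, LinearMap.id_apply]
    exact congrArg (fun x => b • x) (core k (FreeMonoid.toList a))
  have h := LinearMap.congr_fun hext G
  simpa using h

lemma shiftL_X_single (k j : Fin n) (a : FreeMonoid (Fin n)) (b : K) :
    shiftL k (Xvar K j * MonoidAlgebra.single a b) =
      if j = k then MonoidAlgebra.single a b else 0 := by
  have hmul : Xvar K j * (MonoidAlgebra.single a b : FreePoly K n) =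
      MonoidAlgebra.single (FreeMonoid.ofList [j] * a) b :=
    (MonoidAlgebra.single_mul_single ..).trans (by rw [one_mul])
  have htl : FreeMonoid.toList (FreeMonoid.ofList [j] * a) = j :: FreeMonoid.toList a := by
    simp [FreeMonoid.toList_mul]
  rw [hmul, shiftL_single, htl, sVal]
  by_cases h : j = k
  · rw [if_pos h, if_pos h, ← single_eq_smul_mono]
  · rw [if_neg h, if_neg h, smul_zero]

lemma shiftL_X_mul (k j : Fin n) (Q : FreePoly K n) :
    shiftL k (Xvar K j * Q) = if j = k then Q else 0 := by
  induction Q using MonoidAlgebra.induction_linear with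
  | zero => rw [mul_zero, map_zero]; split <;> rfl
  | add f g hf hg =>
    rw [mul_add, map_add, hf, hg]
    split <;> simp
  | single a b => exact shiftL_X_single k j a b

lemma shiftL_sum (k : Fin n) (P : Fin n → FreePoly K n) :
    shiftL k (∑ j : Fin n, Xvar K j * P j) = P k := by
  rw [map_sum, Finset.sum_congr rfl fun j _ => shiftL_X_mul k j (P j)]
  simp


theorem cycDeriv_eq_numOp_add_of_mem_cyclicSubspace (P : Fin n → FreePoly K n)
    (h : (∑ j : Fin n, Xvar K j * P j) ∈ LinearMap.range (cycSym (K := K) (n := n))) :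
    ∀ k : Fin n, cycDeriv k (∑ j : Fin n, Xvar K j * P j) = numOp (P k) + P k := by
  intro k
  obtain ⟨G, hG⟩ := h
  have hP : P k = shiftL k (cycSym G) := by rw [hG, shiftL_sum]
  rw [← hG, key k G, hP]
end
end

section
/- A polynomial P ∈ K⟨n⟩ satisfies δ_j P = 0 for all 1 ≤ j ≤ n if and only if P lies in K·1 + [K⟨n⟩, K⟨n⟩], where [K⟨n⟩, K⟨n⟩] denotes the linear span of all commutators [a,b] = ab − ba with a, b ∈ K⟨n⟩. -/
/-! Setup: the free associative algebra `K⟨X_1,…,X_n⟩` realized as the monoid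
algebra of the free monoid on `Fin n`, together with the partial cyclic
derivatives `δ_j`, the number operator `N` and the cyclic symmetrization `C`. -/

noncomputable section

variable {K : Type} [Field K] [CharZero K] {n : ℕ}

def dTerm (j : Fin n) (w : List (Fin n)) (p : ℕ) : FreePoly K n :=
  if w[p]? = some j then mono K (w.drop (p+1) ++ w.take p) else 0

lemma cycDeriv_single (j : Fin n) (w : List (Fin n)) (c : K) :
    cycDeriv j (MonoidAlgebra.single (FreeMonoid.ofList w) c)
      = c • ∑ p ∈ Finset.range w.length, dTerm j w p := by
  rw [cycDeriv, LinearMap.comp_apply, LinearEquiv.coe_coe, MonoidAlgebra.coeffLinearEquiv_apply,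
    MonoidAlgebra.coeff_single]
  erw [Finsupp.lsum_single]
  rw [LinearMap.toSpanSingleton_apply]
  congr 1
  rw [← Fin.sum_univ_eq_sum_range (fun p => dTerm j w p)]
  apply Finset.sum_congr rfl
  intro p _
  simp only [FreeMonoid.toList_ofList, dTerm, List.get_eq_getElem]
  rw [List.getElem?_eq_getElem (by simpa using p.isLt)]
  simp
  rfl

def dSum (j : Fin n) (w : List (Fin n)) : FreePoly K n :=
  ∑ p ∈ Finset.range w.length, dTerm j w p

lemma dSum_cons (j : Fin n) (a : Fin n) (t : List (Fin n)) :
    dSum (K := K) j (a :: t) = dSum j (t ++ [a]) := by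
  unfold dSum
  rw [show (a :: t).length = t.length + 1 from rfl,
      show (t ++ [a]).length = t.length + 1 by simp,
      Finset.sum_range_succ', Finset.sum_range_succ]
  congr 1
  · apply Finset.sum_congr rfl
    intro i hi
    rw [Finset.mem_range] at hi
    unfold dTerm
    rw [List.getElem?_cons_succ,
        List.getElem?_append_left hi]
    congr 1
    · rw [show List.drop (i+1+1) (a::t) = t.drop (i+1) from rfl,
          List.drop_append_of_le_length (by omega),
          show List.take (i+1) (a::t) = a :: t.take i from rfl,
          List.take_append_of_le_length (by omega)]
      simp
  · unfold dTerm
    rw [List.getElem?_cons_zero, List.getElem?_concat_length]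
    simp

lemma dSum_append (j : Fin n) (u v : List (Fin n)) :
    dSum (K := K) j (u ++ v) = dSum j (v ++ u) := by
  induction u generalizing v with
  | nil => simp
  | cons a u ih =>
    calc dSum (K := K) j ((a :: u) ++ v) = dSum j (a :: (u ++ v)) := rfl
    _ = dSum j ((u ++ v) ++ [a]) := dSum_cons j a (u ++ v)
    _ = dSum j (u ++ (v ++ [a])) := by rw [List.append_assoc]
    _ = dSum j ((v ++ [a]) ++ u) := ih _
    _ = dSum j (v ++ (a :: u)) := by rw [List.append_assoc]; rfl

lemma mono_mul (u v : List (Fin n)) : mono K u * mono K v = mono K (u ++ v) := by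
  rw [mono, mono, mono, MonoidAlgebra.single_mul_single, one_mul, FreeMonoid.ofList_append]

lemma cycDeriv_mono_mul (j : Fin n) (u v : List (Fin n)) :
    cycDeriv j (mono K u * mono K v) = cycDeriv j (mono K v * mono K u) := by
  rw [mono_mul, mono_mul, mono, mono, cycDeriv_single, cycDeriv_single]
  exact congrArg _ (dSum_append j u v)

lemma ofList_toList_append (x y : FreeMonoid (Fin n)) :
    x * y = FreeMonoid.ofList (FreeMonoid.toList x ++ FreeMonoid.toList y) := by
  rw [FreeMonoid.ofList_append, FreeMonoid.ofList_toList, FreeMonoid.ofList_toList]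

lemma cycDeriv_single_mul_single (j : Fin n) (x y : FreeMonoid (Fin n)) (c d : K) :
    cycDeriv j (MonoidAlgebra.single x c * MonoidAlgebra.single y d)
      = cycDeriv j (MonoidAlgebra.single y d * MonoidAlgebra.single x c) := by
  rw [MonoidAlgebra.single_mul_single, MonoidAlgebra.single_mul_single,
      ofList_toList_append x y, ofList_toList_append y x,
      cycDeriv_single, cycDeriv_single, mul_comm]
  exact congrArg _ (dSum_append j _ _)

lemma cycDeriv_mul_single (j : Fin n) (a : FreePoly K n) (y : FreeMonoid (Fin n)) (d : K) :
    cycDeriv j (a * MonoidAlgebra.single y d)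
      = cycDeriv j (MonoidAlgebra.single y d * a) := by
  induction a using MonoidAlgebra.induction with
  | zero => simp
  | single_add x c f _ _ hf =>
    rw [add_mul, mul_add, map_add, map_add, hf, cycDeriv_single_mul_single]

lemma cycDeriv_mul_comm (j : Fin n) (a b : FreePoly K n) :
    cycDeriv j (a * b) = cycDeriv j (b * a) := by
  induction b using MonoidAlgebra.induction with
  | zero => simp
  | single_add y d f _ _ hf =>
    rw [mul_add, add_mul, map_add, map_add, hf, cycDeriv_mul_single]

lemma cycSym_single (w : List (Fin n)) (c : K) :
    cycSym (MonoidAlgebra.single (FreeMonoid.ofList w) c)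
      = c • ∑ p ∈ Finset.range w.length, mono K (w.rotate (p + 1)) := by
  rw [cycSym, LinearMap.comp_apply, LinearEquiv.coe_coe, MonoidAlgebra.coeffLinearEquiv_apply,
    MonoidAlgebra.coeff_single]
  erw [Finsupp.lsum_single]
  rw [LinearMap.toSpanSingleton_apply]
  simp only [FreeMonoid.toList_ofList]

lemma rotate_sum_shift (w : List (Fin n)) :
    ∑ p ∈ Finset.range w.length, mono K (w.rotate (p + 1))
      = ∑ p ∈ Finset.range w.length, mono K (w.rotate p) := by
  have h1 := Finset.sum_range_succ' (fun p => mono K (w.rotate p)) w.length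
  have h2 := Finset.sum_range_succ (fun p => mono K (w.rotate p)) w.length
  rw [h2] at h1
  simp only [List.rotate_length, List.rotate_zero] at h1
  calc ∑ p ∈ Finset.range w.length, mono K (w.rotate (p + 1))
      = ∑ p ∈ Finset.range w.length, mono K (w.rotate (p+1)) + mono K w - mono K w := by
        rw [add_sub_cancel_right]
    _ = ∑ p ∈ Finset.range w.length, mono K (w.rotate p) + mono K w - mono K w := by rw [h1]
    _ = ∑ p ∈ Finset.range w.length, mono K (w.rotate p) := add_sub_cancel_right _ _

lemma sum_Xvar_dTerm (w : List (Fin n)) (p : ℕ) (hp : p < w.length) :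
    ∑ j : Fin n, Xvar K j * dTerm j w p = mono K (w.rotate p) := by
  have key : ∀ j : Fin n, Xvar K j * dTerm j w p
      = if w[p] = j then mono K (w[p] :: (w.drop (p+1) ++ w.take p)) else 0 := by
    intro j
    rw [dTerm, List.getElem?_eq_getElem hp]
    simp only [Option.some.injEq, mul_ite, mul_zero]
    split
    · next h => rw [Xvar, mono_mul, List.singleton_append, h]
    · rfl
  simp only [key]
  rw [Finset.sum_ite_eq Finset.univ w[p]
    (fun j => mono K (w[p] :: (w.drop (p+1) ++ w.take p)))]
  rw [if_pos (Finset.mem_univ _), List.rotate_eq_drop_append_take hp.le,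
      List.drop_eq_getElem_cons hp]
  rfl

lemma sum_Xvar_cycDeriv (P : FreePoly K n) :
    ∑ j : Fin n, Xvar K j * cycDeriv j P = cycSym P := by
  induction P using MonoidAlgebra.induction with
  | zero => simp
  | single_add x c f _ _ hf =>
    rw [map_add]
    simp only [map_add, mul_add, Finset.sum_add_distrib, hf]
    congr 1
    have hx : x = FreeMonoid.ofList (FreeMonoid.toList x) := (FreeMonoid.ofList_toList x).symm
    rw [hx]
    set w := FreeMonoid.toList x with hw
    rw [cycSym_single, rotate_sum_shift]
    simp only [cycDeriv_single]
    calc ∑ j : Fin n, Xvar K j * (c • ∑ p ∈ Finset.range w.length, dTerm j w p)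
        = c • ∑ j : Fin n, ∑ p ∈ Finset.range w.length, Xvar K j * dTerm j w p := by
          rw [Finset.smul_sum]
          exact Finset.sum_congr rfl fun j _ => by rw [mul_smul_comm, Finset.mul_sum]
      _ = c • ∑ p ∈ Finset.range w.length, ∑ j : Fin n, Xvar K j * dTerm j w p := by
          rw [Finset.sum_comm]
      _ = c • ∑ p ∈ Finset.range w.length, mono K (w.rotate p) := by
          congr 1
          exact Finset.sum_congr rfl fun p hp =>
            sum_Xvar_dTerm w p (Finset.mem_range.mp hp)

/-- `T`: sends a monomial `w` of length `p ≥ 1` to `(1/p)` times the sum of its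
rotations, and `1` to `0`. -/
def Tavg : FreePoly K n →ₗ[K] FreePoly K n :=
  (Finsupp.lsum K fun w => LinearMap.toSpanSingleton K _
    ((((FreeMonoid.toList w).length : K))⁻¹ •
      ∑ p ∈ Finset.range (FreeMonoid.toList w).length,
        mono K ((FreeMonoid.toList w).rotate p))) ∘ₗ
    (MonoidAlgebra.coeffLinearEquiv K).toLinearMap

/-- `Dinv`: divides a monomial by its length (killing constants). -/
def Dinv : FreePoly K n →ₗ[K] FreePoly K n :=
  (Finsupp.lsum K fun w => LinearMap.toSpanSingleton K _
    ((((FreeMonoid.toList w).length : K))⁻¹ • mono K (FreeMonoid.toList w))) ∘ₗ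
    (MonoidAlgebra.coeffLinearEquiv K).toLinearMap

lemma Tavg_single (w : List (Fin n)) (c : K) :
    Tavg (MonoidAlgebra.single (FreeMonoid.ofList w) c)
      = c • ((w.length : K))⁻¹ • ∑ p ∈ Finset.range w.length, mono K (w.rotate p) := by
  rw [Tavg, LinearMap.comp_apply, LinearEquiv.coe_coe, MonoidAlgebra.coeffLinearEquiv_apply,
    MonoidAlgebra.coeff_single]
  erw [Finsupp.lsum_single]
  rw [LinearMap.toSpanSingleton_apply]
  simp only [FreeMonoid.toList_ofList]

lemma Dinv_single (w : List (Fin n)) (c : K) :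
    Dinv (MonoidAlgebra.single (FreeMonoid.ofList w) c)
      = c • ((w.length : K))⁻¹ • mono K w := by
  rw [Dinv, LinearMap.comp_apply, LinearEquiv.coe_coe, MonoidAlgebra.coeffLinearEquiv_apply,
    MonoidAlgebra.coeff_single]
  erw [Finsupp.lsum_single]
  rw [LinearMap.toSpanSingleton_apply]
  simp only [FreeMonoid.toList_ofList]

lemma Dinv_mono (w : List (Fin n)) :
    Dinv (mono K w) = ((w.length : K))⁻¹ • mono K w := by
  rw [mono, Dinv_single, one_smul, mono]

lemma Tavg_eq_Dinv_cycSym (P : FreePoly K n) : Tavg P = Dinv (cycSym P) := by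
  induction P using MonoidAlgebra.induction with
  | zero => simp
  | single_add x c f _ _ hf =>
    rw [map_add, map_add, map_add, hf]
    congr 1
    have hx : x = FreeMonoid.ofList (FreeMonoid.toList x) := (FreeMonoid.ofList_toList x).symm
    rw [hx]
    set w := FreeMonoid.toList x
    rw [Tavg_single, cycSym_single, rotate_sum_shift, map_smul, map_sum]
    congr 1
    rw [Finset.smul_sum]
    refine Finset.sum_congr rfl fun p hp => ?_
    rw [Dinv_mono, List.length_rotate]

def commSpan (K : Type) [Field K] (n : ℕ) : Submodule K (FreePoly K n) :=
  Submodule.span K {x : FreePoly K n | ∃ a b : FreePoly K n, x = a * b - b * a}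

lemma mono_sub_rotate_mem (w : List (Fin n)) (k : ℕ) :
    mono K w - mono K (w.rotate k) ∈ commSpan K n := by
  rcases List.eq_nil_or_concat w with rfl | _
  · simp [Submodule.zero_mem]
  have hlen : 0 < w.length := by
    next hne => rcases hne with ⟨l, a, rfl⟩; simp
  rw [← List.rotate_mod]
  have h2 : k % w.length ≤ w.length := (Nat.mod_lt _ hlen).le
  apply Submodule.subset_span
  exact ⟨mono K (w.take (k % w.length)), mono K (w.drop (k % w.length)), by
    rw [mono_mul, mono_mul, List.take_append_drop, List.rotate_eq_drop_append_take h2]⟩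

lemma single_sub_mem (w : List (Fin n)) (c : K) :
    (MonoidAlgebra.single (FreeMonoid.ofList w) c : FreePoly K n)
      - ((MonoidAlgebra.single (FreeMonoid.ofList w) c : FreePoly K n).coeff
          (1 : FreeMonoid (Fin n))) • (1 : FreePoly K n)
      - Tavg (MonoidAlgebra.single (FreeMonoid.ofList w) c) ∈ commSpan K n := by
  rw [Tavg_single]
  cases w with
  | nil =>
    rw [show (FreeMonoid.ofList ([] : List (Fin n))) = 1 from rfl]
    simp only [List.length_nil, Finset.range_zero, Finset.sum_empty, smul_zero, sub_zero]
    rw [MonoidAlgebra.coeff_single, Finsupp.single_eq_same,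
      show (MonoidAlgebra.single (1 : FreeMonoid (Fin n)) c : FreePoly K n)
        = c • (1 : FreePoly K n) by
          rw [MonoidAlgebra.one_def, MonoidAlgebra.smul_single', mul_one]]
    simp [Submodule.zero_mem]
  | cons a t =>
    set w := a :: t with hw
    have hwne : w ≠ [] := by simp [hw]
    have hone : FreeMonoid.ofList w ≠ (1 : FreeMonoid (Fin n)) := by
      intro h
      exact hwne (by simpa using congrArg FreeMonoid.toList h)
    rw [MonoidAlgebra.coeff_single, Finsupp.single_eq_of_ne hone.symm, zero_smul, sub_zero]
    have hsingle : (MonoidAlgebra.single (FreeMonoid.ofList w) c : FreePoly K n)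
        = c • mono K w := by rw [mono, MonoidAlgebra.smul_single', mul_one]
    rw [hsingle, ← smul_sub]
    refine Submodule.smul_mem _ c ?_
    have hlen : (w.length : K) ≠ 0 := by
      simp [Nat.cast_ne_zero, List.length_eq_zero_iff, hwne]
    have key : mono K w - (w.length : K)⁻¹ • ∑ p ∈ Finset.range w.length, mono K (w.rotate p)
        = (w.length : K)⁻¹ • ∑ p ∈ Finset.range w.length,
            (mono K w - mono K (w.rotate p)) := by
      rw [Finset.sum_sub_distrib, smul_sub, Finset.sum_const, Finset.card_range,
          ← Nat.cast_smul_eq_nsmul K, smul_smul, inv_mul_cancel₀ hlen, one_smul]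
    rw [key]
    exact Submodule.smul_mem _ _ (Submodule.sum_mem _ fun p _ => mono_sub_rotate_mem w p)

lemma sub_const_sub_Tavg_mem (P : FreePoly K n) :
    P - (P.coeff (1 : FreeMonoid (Fin n))) • (1 : FreePoly K n) - Tavg P ∈ commSpan K n := by
  induction P using MonoidAlgebra.induction with
  | zero => simp [Submodule.zero_mem]
  | single_add x c f hxf hc hf =>
    have harr : ∀ A B : FreePoly K n, ∀ a b : K, ∀ TA TB : FreePoly K n,
        (A + B) - (a + b) • (1 : FreePoly K n) - (TA + TB)
          = (A - a • 1 - TA) + (B - b • 1 - TB) := by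
      intro A B a b TA TB
      rw [add_smul]; abel
    rw [map_add, MonoidAlgebra.coeff_add, Finsupp.add_apply, harr]
    refine Submodule.add_mem _ ?_ hf
    have := single_sub_mem (K := K) (FreeMonoid.toList x) c
    rwa [FreeMonoid.ofList_toList] at this

lemma cycDeriv_one (j : Fin n) : cycDeriv j (1 : FreePoly K n) = 0 := by
  have h := cycDeriv_single (K := K) j ([] : List (Fin n)) 1
  rw [show (FreeMonoid.ofList ([] : List (Fin n))) = 1 from rfl] at h
  rw [MonoidAlgebra.one_def, h]
  simp

theorem cycDeriv_eq_zero_iff_mem_scalars_sup_commutators (P : FreePoly K n) :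
    (∀ j : Fin n, cycDeriv j P = 0) ↔
      P ∈ Submodule.span K {(1 : FreePoly K n)} ⊔
        Submodule.span K {x : FreePoly K n | ∃ a b : FreePoly K n, x = a * b - b * a} := by
  constructor
  · intro h
    have hC : cycSym P = 0 := by
      rw [← sum_Xvar_cycDeriv]
      simp [h]
    have hT : Tavg P = 0 := by rw [Tavg_eq_Dinv_cycSym, hC, map_zero]
    have hmem := sub_const_sub_Tavg_mem P
    rw [hT, sub_zero] at hmem
    have hP : P = (P.coeff (1 : FreeMonoid (Fin n))) • (1 : FreePoly K n)
        + (P - (P.coeff (1 : FreeMonoid (Fin n))) • (1 : FreePoly K n)) := by abel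
    rw [hP]
    exact Submodule.add_mem _
      (Submodule.mem_sup_left (Submodule.smul_mem _ _ (Submodule.subset_span rfl)))
      (Submodule.mem_sup_right hmem)
  · intro h j
    have hker : Submodule.span K {(1 : FreePoly K n)} ⊔
        Submodule.span K {x : FreePoly K n | ∃ a b : FreePoly K n, x = a * b - b * a}
          ≤ LinearMap.ker (cycDeriv j) := by
      apply sup_le
      · rw [Submodule.span_le]
        rintro x hx
        rw [Set.mem_singleton_iff] at hx
        subst hx
        exact LinearMap.mem_ker.mpr (cycDeriv_one j)
      · rw [Submodule.span_le]
        rintro x ⟨a, b, rfl⟩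
        exact LinearMap.mem_ker.mpr
          (by rw [map_sub, cycDeriv_mul_comm, sub_self])
    exact LinearMap.mem_ker.mp (hker h)
end
end
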